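/- Let n ≥ 2, let H_1, …, H_p be Hermitian U(1)-invariant complex matrices, and set V := Matrix.exp(-i·H_1)·…·Matrix.exp(-i·H_p) (an invertible U(1)-invariant matrix). Then Δ3(V) ≡ -(4/2^n) · Σ_{j=1}^{p} Σ_{l odd, 1 ≤ l ≤ n} (l-1) · Tr(H_j · C_l) (mod 2π), where each trace Tr(H_j · C_l) is real. -/

import Mathlib

open Finset Matrix

noncomputable section

/-- Hamming weight of a basis label. -/
def hw {n : ℕ} (z : Fin n → Bool) : ℕ := (Finset.univ.filter fun i => z i = true).card

/-- The sign `(-1)^{z i}` of a bit. -/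
def sgn (b : Bool) : ℂ := if b = true then -1 else 1

/-- The operator `C_l`: the diagonal matrix with entry
`∑_{S ⊆ Fin n, |S| = l} ∏_{i ∈ S} (-1)^{z i}`. -/
def Cmat (n l : ℕ) : Matrix (Fin n → Bool) (Fin n → Bool) ℂ :=
  Matrix.diagonal fun z => ∑ S ∈ Finset.powersetCard l (Finset.univ : Finset (Fin n)),
    ∏ i ∈ S, sgn (z i)

/-- A matrix is U(1)-invariant if it vanishes off the Hamming-weight blocks. -/
def U1Invariant {n : ℕ} (M : Matrix (Fin n → Bool) (Fin n → Bool) ℂ) : Prop :=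
  ∀ z z', hw z ≠ hw z' → M z z' = 0

/-- The weight-`m` block `M_m` of a matrix `M`. -/
def block {n : ℕ} (M : Matrix (Fin n → Bool) (Fin n → Bool) ℂ) (m : ℕ) :
    Matrix {z : Fin n → Bool // hw z = m} {z : Fin n → Bool // hw z = m} ℂ :=
  fun a b => M a.1 b.1

/-- The phase `θ_m(V) = arg det(V_m)`. -/
def theta {n : ℕ} (V : Matrix (Fin n → Bool) (Fin n → Bool) ℂ) (m : ℕ) : ℝ :=
  Complex.arg (Matrix.det (block V m))

/-- The phase `Δ3(V) = θ_{n-1} - θ_1 - (n-2)(θ_n - θ_0)`. -/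
def Delta3 {n : ℕ} (V : Matrix (Fin n → Bool) (Fin n → Bool) ℂ) : ℝ :=
  theta V (n-1) - theta V 1 - ((n : ℝ) - 2) * (theta V n - theta V 0)

/-- `x ≡ y (mod 2π)`. -/
def Mod2Pi (x y : ℝ) : Prop := ∃ j : ℤ, x - y = 2 * Real.pi * j

section Aux

-- E lemma
lemma Esum {ι : Type*} [DecidableEq ι] (s : Finset ι) (t : ι → ℂ) :
    ∑ S ∈ s.powerset, ∏ i ∈ S, t i = ∏ i ∈ s, (1 + t i) := by
  have h := Finset.prod_add t (fun _ => (1:ℂ)) s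
  simp only [Finset.prod_const_one, mul_one] at h
  rw [← h]
  exact Finset.prod_congr rfl (fun i _ => (add_comm (t i) 1))

lemma Fsum {ι : Type*} [DecidableEq ι] (s : Finset ι) (t : ι → ℂ) :
    ∑ S ∈ s.powerset, (S.card : ℂ) * ∏ i ∈ S, t i
      = ∑ i ∈ s, t i * ∏ j ∈ s.erase i, (1 + t j) := by
  induction s using Finset.induction_on with
  | empty => simp
  | @insert a s ha ih =>
    rw [Finset.sum_powerset_insert ha, Finset.sum_insert ha, ih]
    have h1 : ∀ S ∈ s.powerset, ((insert a S).card : ℂ) * ∏ i ∈ insert a S, t i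
        = ((S.card : ℂ) + 1) * (t a * ∏ i ∈ S, t i) := by
      intro S hS
      have haS : a ∉ S := fun h => ha (Finset.mem_powerset.mp hS h)
      rw [Finset.card_insert_of_notMem haS, Finset.prod_insert haS]
      push_cast; ring
    rw [Finset.sum_congr rfl h1]
    have h2 : Finset.erase (insert a s) a = s := Finset.erase_insert ha
    rw [h2]
    have h3 : ∀ i ∈ s, t i * ∏ j ∈ (insert a s).erase i, (1 + t j)
        = (1 + t a) * (t i * ∏ j ∈ s.erase i, (1 + t j)) := by
      intro i hi
      have hai : a ≠ i := fun h => ha (h ▸ hi)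
      rw [Finset.erase_insert_of_ne (Ne.symm (fun h => hai h.symm))]
      · rw [Finset.prod_insert (fun h => ha (Finset.mem_of_mem_erase h))]
        ring
    rw [Finset.sum_congr rfl h3, ← Esum s t]
    have e1 : ∑ S ∈ s.powerset, ((S.card:ℂ)+1) * (t a * ∏ i ∈ S, t i)
        = t a * (∑ S ∈ s.powerset, (S.card:ℂ) * ∏ i ∈ S, t i)
          + t a * ∑ S ∈ s.powerset, ∏ i ∈ S, t i := by
      rw [Finset.mul_sum, Finset.mul_sum, ← Finset.sum_add_distrib]
      exact Finset.sum_congr rfl fun S _ => by ring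
    have e2 : ∑ i ∈ s, (1 + t a) * (t i * ∏ j ∈ s.erase i, (1 + t j))
        = (1+t a) * ∑ i ∈ s, t i * ∏ j ∈ s.erase i, (1 + t j) := (Finset.mul_sum _ _ _).symm
    rw [e1, e2, ih]
    ring

lemma prod_neg' {ι : Type*} (S : Finset ι) (t : ι → ℂ) :
    ∏ i ∈ S, (-t i) = (-1)^S.card * ∏ i ∈ S, t i := by
  rw [← Finset.prod_const, ← Finset.prod_mul_distrib]
  exact Finset.prod_congr rfl fun i _ => by ring

lemma hw_le {n : ℕ} (z : Fin n → Bool) : hw z ≤ n := by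
  simpa [hw] using (Finset.card_filter_le Finset.univ _).trans (by simp)

lemma hw_eq_zero_iff {n : ℕ} (z : Fin n → Bool) : hw z = 0 ↔ ∀ i, z i = false := by
  simp [hw, Finset.card_eq_zero, Finset.filter_eq_empty_iff]

lemma sgn_not (b : Bool) : sgn (!b) = - sgn b := by cases b <;> simp [sgn]

lemma hw_not {n : ℕ} (z : Fin n → Bool) : hw (fun i => !(z i)) = n - hw z := by
  have h := Finset.card_filter_add_card_filter_not (s := (Finset.univ : Finset (Fin n)))
    (p := fun i => z i = true)
  have h2 : (Finset.univ.filter fun i => ¬ z i = true) = (Finset.univ.filter fun i => (!(z i)) = true) := by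
    apply Finset.filter_congr; intro i _; simp
  rw [h2] at h
  have h5 : (Finset.univ : Finset (Fin n)).card = n := by simp
  have h4 : hw (fun i => !(z i)) = (Finset.univ.filter fun i => (!(z i)) = true).card := by
    simp only [hw]
  rw [h4, hw]
  omega

lemma Eeval {n : ℕ} (z : Fin n → Bool) :
    ∏ i, (1 + sgn (z i)) = if hw z = 0 then (2:ℂ)^n else 0 := by
  by_cases h : hw z = 0
  · rw [if_pos h]
    have hz := (hw_eq_zero_iff z).mp h
    calc ∏ i, (1 + sgn (z i)) = ∏ _i : Fin n, (2:ℂ) := by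
          refine Finset.prod_congr rfl fun i _ => ?_
          rw [hz i]; norm_num [sgn]
      _ = 2^n := by simp
  · rw [if_neg h]
    have hne : (Finset.univ.filter fun i => z i = true).Nonempty := by
      rw [← Finset.card_pos]
      exact Nat.pos_of_ne_zero h
    obtain ⟨i, hi⟩ := hne
    have hz : z i = true := (Finset.mem_filter.mp hi).2
    apply Finset.prod_eq_zero (Finset.mem_univ i)
    rw [hz]; norm_num [sgn]

lemma Feval {n : ℕ} (z : Fin n → Bool) :
    ∑ i, sgn (z i) * ∏ j ∈ Finset.univ.erase i, (1 + sgn (z j))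
      = if hw z = 0 then (n:ℂ) * 2^(n-1) else if hw z = 1 then -(2^(n-1)) else 0 := by
  by_cases h0 : hw z = 0
  · rw [if_pos h0]
    have hz := (hw_eq_zero_iff z).mp h0
    have : ∀ i ∈ (Finset.univ : Finset (Fin n)), sgn (z i) * ∏ j ∈ Finset.univ.erase i, (1 + sgn (z j))
        = (2:ℂ)^(n-1) := by
      intro i _
      rw [hz i]
      have : ∏ j ∈ Finset.univ.erase i, (1 + sgn (z j)) = ∏ _j ∈ Finset.univ.erase i, (2:ℂ) := by
        refine Finset.prod_congr rfl fun j _ => ?_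
        rw [hz j]; norm_num [sgn]
      rw [this, Finset.prod_const, Finset.card_erase_of_mem (Finset.mem_univ i)]
      simp [sgn]
    rw [Finset.sum_congr rfl this, Finset.sum_const]
    simp [mul_comm]
  · rw [if_neg h0]
    by_cases h1 : hw z = 1
    · rw [if_pos h1]
      obtain ⟨i0, hi0⟩ := Finset.card_eq_one.mp h1
      have hzi0 : z i0 = true := by
        have : i0 ∈ Finset.univ.filter fun i => z i = true := by rw [hi0]; exact Finset.mem_singleton_self i0
        exact (Finset.mem_filter.mp this).2
      have hzother : ∀ j, j ≠ i0 → z j = false := by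
        intro j hj
        by_contra hc
        have : j ∈ Finset.univ.filter fun i => z i = true := by
          simp [Finset.mem_filter]; revert hc; cases z j <;> simp
        rw [hi0] at this
        exact hj (Finset.mem_singleton.mp this)
      rw [Finset.sum_eq_single_of_mem i0 (Finset.mem_univ i0)]
      · rw [hzi0]
        have : ∏ j ∈ Finset.univ.erase i0, (1 + sgn (z j)) = ∏ _j ∈ Finset.univ.erase i0, (2:ℂ) := by
          refine Finset.prod_congr rfl fun j hj => ?_
          rw [hzother j (Finset.ne_of_mem_erase hj)]; norm_num [sgn]
        rw [this, Finset.prod_const, Finset.card_erase_of_mem (Finset.mem_univ i0)]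
        simp [sgn]
      · intro b _ hb
        apply mul_eq_zero_of_right
        apply Finset.prod_eq_zero (Finset.mem_erase.mpr ⟨Ne.symm hb, Finset.mem_univ i0⟩)
        rw [hzi0]; norm_num [sgn]
    · rw [if_neg h1]
      have h2 : 1 < (Finset.univ.filter fun i => z i = true).card := by
        unfold hw at h0 h1; omega
      apply Finset.sum_eq_zero
      intro i _
      obtain ⟨j, hj, hji⟩ := Finset.exists_mem_ne h2 i
      have hzj : z j = true := (Finset.mem_filter.mp hj).2
      apply mul_eq_zero_of_right
      apply Finset.prod_eq_zero (Finset.mem_erase.mpr ⟨hji, Finset.mem_univ j⟩)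
      rw [hzj]; norm_num [sgn]

lemma key {n : ℕ} (hn : 2 ≤ n) (z : Fin n → Bool) :
    ∑ l ∈ (Finset.range (n+1)).filter (fun l => Odd l),
        (((l : ℂ) - 1) * ∑ S ∈ Finset.powersetCard l (Finset.univ : Finset (Fin n)), ∏ i ∈ S, sgn (z i))
    = 2^(n-2) * ((if hw z = n-1 then (1:ℂ) else 0) - (if hw z = 1 then 1 else 0)
        - ((n:ℂ) - 2) * ((if hw z = n then 1 else 0) - (if hw z = 0 then 1 else 0))) := by
  have hcard : (Finset.univ : Finset (Fin n)).card = n := by simp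
  have step1 : ∑ l ∈ (Finset.range (n+1)).filter (fun l => Odd l),
      (((l : ℂ) - 1) * ∑ S ∈ Finset.powersetCard l (Finset.univ : Finset (Fin n)), ∏ i ∈ S, sgn (z i))
      = ∑ S ∈ (Finset.univ : Finset (Fin n)).powerset,
          (if Odd S.card then ((S.card : ℂ) - 1) * ∏ i ∈ S, sgn (z i) else 0) := by
    rw [Finset.sum_filter, Finset.sum_powerset, hcard]
    refine Finset.sum_congr rfl fun l _ => ?_
    have hS : ∀ S ∈ Finset.powersetCard l (Finset.univ : Finset (Fin n)), S.card = l :=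
      fun S hS => (Finset.mem_powersetCard.mp hS).2
    by_cases hodd : Odd l
    · rw [if_pos hodd, Finset.mul_sum]
      refine Finset.sum_congr rfl fun S hSm => ?_
      rw [hS S hSm, if_pos hodd]
    · rw [if_neg hodd]
      symm; apply Finset.sum_eq_zero; intro S hSm; rw [hS S hSm, if_neg hodd]
  have point : ∀ S ∈ (Finset.univ : Finset (Fin n)).powerset,
      (if Odd S.card then ((S.card : ℂ) - 1) * ∏ i ∈ S, sgn (z i) else 0)
      = (1/2) * (((S.card : ℂ) * ∏ i ∈ S, sgn (z i) - ∏ i ∈ S, sgn (z i))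
          - ((S.card : ℂ) * ∏ i ∈ S, (- sgn (z i)) - ∏ i ∈ S, (- sgn (z i)))) := by
    intro S _
    rw [prod_neg']
    rcases Nat.even_or_odd S.card with he | ho
    · rw [if_neg (by simpa [Nat.not_odd_iff_even] using he), he.neg_one_pow]
      ring
    · rw [if_pos ho, ho.neg_one_pow]
      ring
  rw [step1, Finset.sum_congr rfl point, ← Finset.mul_sum]
  simp only [Finset.sum_sub_distrib]
  rw [Fsum, Esum, Fsum, Esum]
  have hnot : ∀ i, - sgn (z i) = sgn (!(z i)) := fun i => (sgn_not (z i)).symm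
  simp only [hnot]
  have hEe := Eeval z
  have hFe := Feval z
  have hEe' := Eeval (fun i => !(z i))
  have hFe' := Feval (fun i => !(z i))
  rw [hEe, hFe, hEe', hFe', hw_not]
  have hm : hw z ≤ n := hw_le z
  obtain ⟨k, rfl⟩ : ∃ k, n = k + 2 := ⟨n - 2, by omega⟩
  have e1 : k + 2 - 1 = k + 1 := by omega
  have e2 : k + 2 - 2 = k := by omega
  rw [e1, e2]
  split_ifs <;> first
    | omega
    | (push_cast; ring)
    | (first
        | (have hk0 : k = 0 := by omega
           subst hk0; push_cast; norm_num)
        | (push_cast; ring_nf))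


lemma U1_one {n : ℕ} : U1Invariant (1 : Matrix (Fin n → Bool) (Fin n → Bool) ℂ) := by
  intro z z' h
  have : z ≠ z' := fun e => h (by rw [e])
  simp [Matrix.one_apply, this]

lemma U1_mul {n : ℕ} {M N : Matrix (Fin n → Bool) (Fin n → Bool) ℂ}
    (hM : U1Invariant M) (hN : U1Invariant N) : U1Invariant (M * N) := by
  intro z z' h
  rw [Matrix.mul_apply]
  apply Finset.sum_eq_zero
  intro c _
  by_cases hc : hw z = hw c
  · rw [hN c z' (by omega), mul_zero]
  · rw [hM z c hc, zero_mul]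

lemma U1_pow {n : ℕ} {M : Matrix (Fin n → Bool) (Fin n → Bool) ℂ}
    (hM : U1Invariant M) (k : ℕ) : U1Invariant (M ^ k) := by
  induction k with
  | zero => simpa using U1_one
  | succ k ih => rw [pow_succ]; exact U1_mul ih hM

lemma block_one {n m : ℕ} : block (1 : Matrix (Fin n → Bool) (Fin n → Bool) ℂ) m = 1 := by
  ext a b
  by_cases h : a = b
  · subst h; simp [block, Matrix.one_apply]
  · have : a.1 ≠ b.1 := fun e => h (Subtype.ext e)
    simp [block, Matrix.one_apply, h, this]

lemma block_mul {n m : ℕ} {M N : Matrix (Fin n → Bool) (Fin n → Bool) ℂ}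
    (hM : U1Invariant M) : block (M * N) m = block M m * block N m := by
  ext a b
  show (M * N) a.1 b.1 = ∑ c : {z : Fin n → Bool // hw z = m}, M a.1 c.1 * N c.1 b.1
  rw [Matrix.mul_apply]
  rw [← Finset.sum_subtype (Finset.univ.filter fun z : Fin n → Bool => hw z = m)
    (fun z => by simp) (fun z => M a.1 z * N z b.1)]
  symm
  apply Finset.sum_subset (Finset.filter_subset _ _)
  intro c _ hc
  have : hw c ≠ m := by simpa using hc
  rw [hM a.1 c (by rw [a.2]; omega), zero_mul]

lemma block_pow {n m : ℕ} {M : Matrix (Fin n → Bool) (Fin n → Bool) ℂ}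
    (hM : U1Invariant M) (k : ℕ) : block (M ^ k) m = (block M m) ^ k := by
  induction k with
  | zero => simpa using block_one
  | succ k ih => rw [pow_succ, pow_succ, block_mul (U1_pow hM k), ih]

def blockCLM (n m : ℕ) :
    Matrix (Fin n → Bool) (Fin n → Bool) ℂ →L[ℂ]
      Matrix {z : Fin n → Bool // hw z = m} {z : Fin n → Bool // hw z = m} ℂ :=
  LinearMap.toContinuousLinearMap
    { toFun := fun M => block M m
      map_add' := fun _ _ => rfl
      map_smul' := fun _ _ => rfl }

def entryCLM (n : ℕ) (z z' : Fin n → Bool) :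
    Matrix (Fin n → Bool) (Fin n → Bool) ℂ →L[ℂ] ℂ :=
  LinearMap.toContinuousLinearMap
    { toFun := fun M => M z z'
      map_add' := fun _ _ => rfl
      map_smul' := fun _ _ => rfl }

lemma block_exp {n m : ℕ} {M : Matrix (Fin n → Bool) (Fin n → Bool) ℂ}
    (hM : U1Invariant M) :
    block (NormedSpace.exp M) m = NormedSpace.exp (block M m) := by
  letI : SeminormedRing (Matrix (Fin n → Bool) (Fin n → Bool) ℂ) := Matrix.linftyOpSemiNormedRing
  letI : NormedRing (Matrix (Fin n → Bool) (Fin n → Bool) ℂ) := Matrix.linftyOpNormedRing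
  letI : NormedAlgebra ℂ (Matrix (Fin n → Bool) (Fin n → Bool) ℂ) := Matrix.linftyOpNormedAlgebra
  letI : SeminormedRing (Matrix {z : Fin n → Bool // hw z = m} {z : Fin n → Bool // hw z = m} ℂ) :=
    Matrix.linftyOpSemiNormedRing
  letI : NormedRing (Matrix {z : Fin n → Bool // hw z = m} {z : Fin n → Bool // hw z = m} ℂ) :=
    Matrix.linftyOpNormedRing
  letI : NormedAlgebra ℂ (Matrix {z : Fin n → Bool // hw z = m} {z : Fin n → Bool // hw z = m} ℂ) :=
    Matrix.linftyOpNormedAlgebra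
  rw [NormedSpace.exp_eq_tsum ℂ]
  have hsum : Summable fun k : ℕ => ((k.factorial : ℂ)⁻¹) • M ^ k :=
    NormedSpace.expSeries_summable' M
  have := (blockCLM n m).map_tsum hsum
  calc block (∑' k : ℕ, ((k.factorial : ℂ)⁻¹) • M ^ k) m
      = ∑' k : ℕ, blockCLM n m (((k.factorial : ℂ)⁻¹) • M ^ k) := this
    _ = ∑' k : ℕ, ((k.factorial : ℂ)⁻¹) • (block M m) ^ k := by
        refine tsum_congr fun k => ?_
        rw [(blockCLM n m).map_smul]
        show ((k.factorial : ℂ)⁻¹) • block (M ^ k) m = _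
        rw [block_pow hM]
    _ = NormedSpace.exp (block M m) := by rw [NormedSpace.exp_eq_tsum ℂ]

lemma U1_exp {n : ℕ} {M : Matrix (Fin n → Bool) (Fin n → Bool) ℂ}
    (hM : U1Invariant M) : U1Invariant (NormedSpace.exp M) := by
  letI : SeminormedRing (Matrix (Fin n → Bool) (Fin n → Bool) ℂ) := Matrix.linftyOpSemiNormedRing
  letI : NormedRing (Matrix (Fin n → Bool) (Fin n → Bool) ℂ) := Matrix.linftyOpNormedRing
  letI : NormedAlgebra ℂ (Matrix (Fin n → Bool) (Fin n → Bool) ℂ) := Matrix.linftyOpNormedAlgebra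
  intro z z' h
  rw [NormedSpace.exp_eq_tsum ℂ]
  show (tsum (fun k : ℕ => ((k.factorial : ℂ)⁻¹) • M ^ k)) z z' = 0
  have hsum : Summable fun k : ℕ => ((k.factorial : ℂ)⁻¹) • M ^ k :=
    NormedSpace.expSeries_summable' M
  have := (entryCLM n z z').map_tsum hsum
  have e0 : entryCLM n z z' (∑' k : ℕ, ((k.factorial : ℂ)⁻¹) • M ^ k)
      = (∑' k : ℕ, ((k.factorial : ℂ)⁻¹) • M ^ k) z z' := rfl
  rw [← e0, this]
  have : ∀ k : ℕ, entryCLM n z z' (((k.factorial : ℂ)⁻¹) • M ^ k) = 0 := by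
    intro k
    rw [(entryCLM n z z').map_smul]
    show ((k.factorial : ℂ)⁻¹) • (M ^ k) z z' = 0
    rw [U1_pow hM k z z' h, smul_zero]
  rw [tsum_congr this, tsum_zero]

lemma trace_real {ι : Type*} [Fintype ι] {A : Matrix ι ι ℂ} (hA : A.IsHermitian) :
    A.trace = ((A.trace.re : ℝ) : ℂ) := by
  have : (starRingEnd ℂ) A.trace = A.trace := by
    rw [Matrix.trace]
    rw [map_sum]
    refine Finset.sum_congr rfl fun i _ => ?_
    exact congrFun (congrFun hA i) i
  exact (Complex.conj_eq_iff_re.mp this).symm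

lemma block_herm {n m : ℕ} {A : Matrix (Fin n → Bool) (Fin n → Bool) ℂ}
    (hA : A.IsHermitian) : (block A m).IsHermitian := by
  ext a b
  show (starRingEnd ℂ) (A b.1 a.1) = A a.1 b.1
  exact congrFun (congrFun hA a.1) b.1

lemma det_exp_herm {ι : Type*} [Fintype ι] [DecidableEq ι] {A : Matrix ι ι ℂ}
    (hA : A.IsHermitian) :
    Matrix.det (NormedSpace.exp ((-Complex.I) • A)) = Complex.exp (-Complex.I * A.trace) := by
  set U : Matrix ι ι ℂ := (Matrix.IsHermitian.eigenvectorUnitary hA : Matrix ι ι ℂ) with hU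
  have hmem := (Matrix.IsHermitian.eigenvectorUnitary hA).2
  have h1 : U * star U = 1 := (Matrix.mem_unitaryGroup_iff.mp hmem)
  have h2 : star U * U = 1 := (Matrix.mem_unitaryGroup_iff'.mp hmem)
  have hUnit : IsUnit U := ⟨⟨U, star U, h1, h2⟩, rfl⟩
  have hUinv : U⁻¹ = star U := Matrix.inv_eq_left_inv h2
  set D : Matrix ι ι ℂ := Matrix.diagonal (fun i => ((hA.eigenvalues i : ℝ) : ℂ)) with hD
  have hspec : A = U * D * U⁻¹ := by
    rw [hUinv]
    exact hA.spectral_theorem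
  have hconj : (-Complex.I) • A = U * ((-Complex.I) • D) * U⁻¹ := by
    rw [hspec, Matrix.mul_smul, Matrix.smul_mul]
  rw [hconj, Matrix.exp_conj U ((-Complex.I) • D) hUnit, Matrix.det_conj hUnit]
  have hdiag : (-Complex.I) • D = Matrix.diagonal (fun i => -Complex.I * ((hA.eigenvalues i : ℝ) : ℂ)) := by
    rw [hD, ← Matrix.diagonal_smul]
    congr 1
  rw [hdiag, Matrix.exp_diagonal, Matrix.det_diagonal]
  have hpi : ∀ i : ι, (NormedSpace.exp (fun j => -Complex.I * ((hA.eigenvalues j : ℝ) : ℂ))) i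
      = NormedSpace.exp (-Complex.I * ((hA.eigenvalues i : ℝ) : ℂ)) := by
    intro i
    rw [Pi.coe_exp]
  rw [Finset.prod_congr rfl (fun i _ => hpi i)]
  have hexp : ∀ i, NormedSpace.exp (-Complex.I * ((hA.eigenvalues i : ℝ) : ℂ))
      = Complex.exp (-Complex.I * ((hA.eigenvalues i : ℝ) : ℂ)) := by
    intro i; rw [Complex.exp_eq_exp_ℂ]
  calc ∏ i, NormedSpace.exp (-Complex.I * ((hA.eigenvalues i : ℝ) : ℂ))
      = ∏ i, Complex.exp (-Complex.I * ((hA.eigenvalues i : ℝ) : ℂ)) :=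
        Finset.prod_congr rfl fun i _ => hexp i
    _ = Complex.exp (∑ i, -Complex.I * ((hA.eigenvalues i : ℝ) : ℂ)) := by
        rw [Complex.exp_sum]
    _ = Complex.exp (-Complex.I * A.trace) := by
        congr 1
        rw [← Finset.mul_sum]
        congr 1
        have htr : A.trace = D.trace := by
          conv_lhs => rw [hspec]
          rw [Matrix.trace_mul_comm (U * D) U⁻¹, ← Matrix.mul_assoc, hUinv, h2, Matrix.one_mul]
        rw [htr, hD, Matrix.trace_diagonal]

lemma arg_exp_mod (x : ℝ) :
    ∃ k : ℤ, Complex.arg (Complex.exp ((x : ℂ) * Complex.I)) = x + 2 * Real.pi * k := by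
  set w := Complex.exp ((x : ℂ) * Complex.I) with hw
  have habs : ‖w‖ = 1 := Complex.norm_exp_ofReal_mul_I x
  have h2 : Complex.exp ((Complex.arg w : ℂ) * Complex.I) = Complex.exp ((x : ℂ) * Complex.I) := by
    have := Complex.norm_mul_exp_arg_mul_I w
    rw [habs] at this
    simpa using this
  rw [Complex.exp_eq_exp_iff_exists_int] at h2
  obtain ⟨k, hk⟩ := h2
  refine ⟨k, ?_⟩
  have : ((Complex.arg w : ℝ) : ℂ) = ((x + 2 * Real.pi * k : ℝ) : ℂ) := by
    apply mul_right_cancel₀ Complex.I_ne_zero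
    rw [hk]; push_cast; ring
  exact_mod_cast this
lemma trace_block {n m : ℕ} (A : Matrix (Fin n → Bool) (Fin n → Bool) ℂ) :
    Matrix.trace (block A m) = ∑ z : Fin n → Bool, (if hw z = m then A z z else 0) := by
  have h1 : Matrix.trace (block A m) = ∑ a : {z : Fin n → Bool // hw z = m}, A a.1 a.1 := rfl
  rw [h1, ← Finset.sum_subtype (Finset.univ.filter fun z : Fin n → Bool => hw z = m)
    (fun z => by simp) (fun z => A z z), Finset.sum_filter]

lemma trace_mul_C {n l : ℕ} (A : Matrix (Fin n → Bool) (Fin n → Bool) ℂ) :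
    Matrix.trace (A * Cmat n l) = ∑ z : Fin n → Bool,
      A z z * (∑ S ∈ Finset.powersetCard l (Finset.univ : Finset (Fin n)), ∏ i ∈ S, sgn (z i)) := by
  rw [Matrix.trace]
  refine Finset.sum_congr rfl fun z _ => ?_
  show (A * Cmat n l) z z = _
  rw [Cmat, Matrix.mul_diagonal]

lemma claimC {n : ℕ} (hn : 2 ≤ n) (A : Matrix (Fin n → Bool) (Fin n → Bool) ℂ) :
    Matrix.trace (block A (n-1)) - Matrix.trace (block A 1)
      - ((((n:ℝ) - 2 : ℝ)) : ℂ) * (Matrix.trace (block A n) - Matrix.trace (block A 0))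
    = (((4 : ℝ) / 2^n : ℝ) : ℂ) * ∑ l ∈ (Finset.range (n+1)).filter (fun l => Odd l),
        ((((l:ℝ) - 1 : ℝ)) : ℂ) * Matrix.trace (A * Cmat n l) := by
  have hc : (4 : ℂ) / 2^n * 2^(n-2) = 1 := by
    obtain ⟨k, rfl⟩ : ∃ k, n = k + 2 := ⟨n - 2, by omega⟩
    have e2 : k + 2 - 2 = k := by omega
    rw [e2, pow_add]
    have h2k : (2:ℂ)^k ≠ 0 := pow_ne_zero _ (by norm_num)
    field_simp
    ring
  have hrw : ∀ l ∈ (Finset.range (n+1)).filter (fun l => Odd l),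
      ((((l:ℝ) - 1 : ℝ)) : ℂ) * Matrix.trace (A * Cmat n l)
      = ∑ z : Fin n → Bool, A z z * (((l : ℂ) - 1)
          * ∑ S ∈ Finset.powersetCard l (Finset.univ : Finset (Fin n)), ∏ i ∈ S, sgn (z i)) := by
    intro l _
    rw [trace_mul_C, Finset.mul_sum]
    refine Finset.sum_congr rfl fun z _ => ?_
    push_cast
    ring
  rw [Finset.sum_congr rfl hrw, Finset.sum_comm]
  rw [trace_block, trace_block, trace_block, trace_block]
  rw [Finset.mul_sum]
  rw [← Finset.sum_sub_distrib, ← Finset.sum_sub_distrib, Finset.mul_sum, ← Finset.sum_sub_distrib]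
  refine Finset.sum_congr rfl fun z _ => ?_
  rw [← Finset.mul_sum, key hn z]
  have hite : ∀ (P : Prop) [Decidable P], (if P then A z z else 0) = A z z * (if P then (1:ℂ) else 0) :=
    fun P _ => by split_ifs <;> ring
  rw [hite, hite, hite, hite]
  have hco : ((((4:ℝ)/2^n : ℝ)) : ℂ) = (4:ℂ)/2^n := by push_cast; ring
  have hcn : ((((n:ℝ) - 2 : ℝ)) : ℂ) = (n:ℂ) - 2 := by push_cast; ring
  rw [hco, hcn]
  set c : ℂ := (4:ℂ)/2^n with hcdef
  set P : ℂ := (2:ℂ)^(n-2) with hPdef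
  clear_value c P
  linear_combination (-A z z * ((if hw z = n-1 then (1:ℂ) else 0) - (if hw z = 1 then 1 else 0)
    - ((n:ℂ) - 2) * ((if hw z = n then 1 else 0) - (if hw z = 0 then 1 else 0)))) * hc

end Aux

lemma U1_smul {n : ℕ} {M : Matrix (Fin n → Bool) (Fin n → Bool) ℂ}
    (hM : U1Invariant M) (c : ℂ) : U1Invariant (c • M) := by
  intro z z' h
  show c • M z z' = 0
  rw [hM z z' h, smul_zero]

lemma block_smul {n m : ℕ} (c : ℂ) (M : Matrix (Fin n → Bool) (Fin n → Bool) ℂ) :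
    block (c • M) m = c • block M m := rfl

lemma block_list {n m : ℕ} (L : List (Matrix (Fin n → Bool) (Fin n → Bool) ℂ))
    (h : ∀ M ∈ L, U1Invariant M) :
    block L.prod m = (L.map (fun M => block M m)).prod := by
  induction L with
  | nil => simpa using block_one
  | cons A L ih =>
    rw [List.prod_cons, List.map_cons, List.prod_cons, block_mul (h A (by simp)),
      ih (fun M hM => h M (by simp [hM]))]

lemma det_block_exp {n m : ℕ} {A : Matrix (Fin n → Bool) (Fin n → Bool) ℂ}
    (hA : A.IsHermitian) (hU : U1Invariant A) :
    (block (NormedSpace.exp ((-Complex.I) • A)) m).det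
      = Complex.exp (-Complex.I * Matrix.trace (block A m)) := by
  rw [block_exp (U1_smul hU _), block_smul, det_exp_herm (block_herm hA)]

/-- for `V` a product of exponentials of Hermitian U(1)-invariant
Hamiltonians, `Δ3(V) ≡ -(4/2^n) ∑_j ∑_{l odd} (l-1) Tr(H_j C_l) (mod 2π)`. -/
theorem stmt17 (n : ℕ) (hn : 2 ≤ n) (p : ℕ)
    (H : Fin p → Matrix (Fin n → Bool) (Fin n → Bool) ℂ)
    (hherm : ∀ j, (H j).IsHermitian) (hU1 : ∀ j, U1Invariant (H j))
    (V : Matrix (Fin n → Bool) (Fin n → Bool) ℂ)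
    (hV : V = (List.ofFn fun j => NormedSpace.exp ((-Complex.I) • H j)).prod) :
    Mod2Pi (Delta3 V)
      (-(4 / 2^n) * ∑ j, ∑ l ∈ (Finset.range (n+1)).filter (fun l => Odd l),
        ((l : ℝ) - 1) * (Matrix.trace (H j * Cmat n l)).re) := by
  have hU1f : ∀ j, U1Invariant (NormedSpace.exp ((-Complex.I) • H j)) :=
    fun j => U1_exp (U1_smul (hU1 j) _)
  have hall : ∀ M ∈ List.ofFn (fun j => NormedSpace.exp ((-Complex.I) • H j)), U1Invariant M := by
    intro M hM
    rw [List.mem_ofFn] at hM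
    obtain ⟨j, rfl⟩ := hM
    exact hU1f j
  set t : ℕ → ℝ := fun m => ∑ j, (Matrix.trace (block (H j) m)).re with ht
  have hdet : ∀ m, (block V m).det = Complex.exp (((-(t m) : ℝ) : ℂ) * Complex.I) := by
    intro m
    rw [hV, block_list _ hall, List.map_ofFn]
    rw [← Matrix.coe_detMonoidHom, map_list_prod, List.map_ofFn, List.prod_ofFn]
    have hper : (∏ i : Fin p, (⇑Matrix.detMonoidHom ∘ (fun M => block M m)
          ∘ fun j => NormedSpace.exp ((-Complex.I) • H j)) i)
        = ∏ j : Fin p, Complex.exp (-Complex.I * (((Matrix.trace (block (H j) m)).re : ℝ) : ℂ)) := by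
      refine Finset.prod_congr rfl fun j _ => ?_
      show Matrix.det (block (NormedSpace.exp ((-Complex.I) • H j)) m)
        = Complex.exp (-Complex.I * (((Matrix.trace (block (H j) m)).re : ℝ) : ℂ))
      rw [det_block_exp (hherm j) (hU1 j)]
      congr 1
      rw [← trace_real (block_herm (hherm j))]
    rw [hper, ← Complex.exp_sum]
    congr 1
    rw [← Finset.mul_sum]
    have hts : ∑ j, (((Matrix.trace (block (H j) m)).re : ℝ) : ℂ) = ((t m : ℝ) : ℂ) := by
      rw [ht]
      push_cast
      rfl
    rw [hts]
    push_cast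
    ring
  have htheta : ∀ m, ∃ k : ℤ, theta V m = -(t m) + 2*Real.pi*k := by
    intro m
    rw [theta, hdet m]
    exact arg_exp_mod (-(t m))
  have hclaim : ∀ j : Fin p, (Matrix.trace (block (H j) (n-1))).re - (Matrix.trace (block (H j) 1)).re
      - ((n:ℝ) - 2) * ((Matrix.trace (block (H j) n)).re - (Matrix.trace (block (H j) 0)).re)
      = (4 / 2^n) * ∑ l ∈ (Finset.range (n+1)).filter (fun l => Odd l),
          ((l:ℝ) - 1) * (Matrix.trace (H j * Cmat n l)).re := by
    intro j
    have h := congrArg Complex.re (claimC hn (H j))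
    simp only [Complex.sub_re, Complex.re_ofReal_mul, Complex.re_sum] at h
    exact h
  have hsum : ∑ j, ((Matrix.trace (block (H j) (n-1))).re - (Matrix.trace (block (H j) 1)).re
      - ((n:ℝ) - 2) * ((Matrix.trace (block (H j) n)).re - (Matrix.trace (block (H j) 0)).re))
      = ∑ j, (4 / 2^n) * ∑ l ∈ (Finset.range (n+1)).filter (fun l => Odd l),
          ((l:ℝ) - 1) * (Matrix.trace (H j * Cmat n l)).re :=
    Finset.sum_congr rfl fun j _ => hclaim j
  simp only [Finset.sum_sub_distrib, ← Finset.mul_sum] at hsum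
  obtain ⟨k1, hk1⟩ := htheta (n-1)
  obtain ⟨k2, hk2⟩ := htheta 1
  obtain ⟨k3, hk3⟩ := htheta n
  obtain ⟨k4, hk4⟩ := htheta 0
  refine ⟨k1 - k2 - ((n:ℤ) - 2) * (k3 - k4), ?_⟩
  rw [Delta3, hk1, hk2, hk3, hk4]
  simp only [ht] at *
  push_cast
  linear_combination (-1 : ℝ) * hsum
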